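/- Let q : ℝ → ℝ be continuous on [0,1], let b_i ≠ b_j be real numbers, and for k ∈ {i,j} let u_k : ℝ → ℝ be twice continuously differentiable on [0,1] and satisfy -u_k''(x) + q(x)u_k(x) + b_k u_k(x) = 0 for all x ∈ (0,1), with u_k'(0) = -1 and u_k'(1) = 0. Then ∫₀¹ u_i'(x)u_j'(x) dx + ∫₀¹ q(x)u_i(x)u_j(x) dx = (b_j u_j(0) - b_i u_i(0)) / (b_j - b_i). -/

import Mathlib

open intervalIntegral

/-- Loewner formula for the stiffness matrix entry: for exact solutions at
distinct spectral values `b_i ≠ b_j`,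
`∫₀¹ u_i' u_j' + ∫₀¹ q u_i u_j = (b_j u_j(0) - b_i u_i(0)) / (b_j - b_i)`. -/
theorem loewner_stiffness_matrix_entry
    (q uI uI' uI'' uJ uJ' uJ'' : ℝ → ℝ) (bI bJ : ℝ)
    (hb : bI ≠ bJ)
    (hq : ContinuousOn q (Set.Icc 0 1))
    (huI' : ∀ x ∈ Set.Icc (0:ℝ) 1, HasDerivWithinAt uI (uI' x) (Set.Icc 0 1) x)
    (huI'' : ∀ x ∈ Set.Icc (0:ℝ) 1, HasDerivWithinAt uI' (uI'' x) (Set.Icc 0 1) x)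
    (huIc : ContinuousOn uI'' (Set.Icc 0 1))
    (huJ' : ∀ x ∈ Set.Icc (0:ℝ) 1, HasDerivWithinAt uJ (uJ' x) (Set.Icc 0 1) x)
    (huJ'' : ∀ x ∈ Set.Icc (0:ℝ) 1, HasDerivWithinAt uJ' (uJ'' x) (Set.Icc 0 1) x)
    (huJc : ContinuousOn uJ'' (Set.Icc 0 1))
    (hodeI : ∀ x ∈ Set.Ioo (0:ℝ) 1, -uI'' x + q x * uI x + bI * uI x = 0)
    (hodeJ : ∀ x ∈ Set.Ioo (0:ℝ) 1, -uJ'' x + q x * uJ x + bJ * uJ x = 0)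
    (hI0 : uI' 0 = -1) (hI1 : uI' 1 = 0)
    (hJ0 : uJ' 0 = -1) (hJ1 : uJ' 1 = 0) :
    (∫ x in (0:ℝ)..1, uI' x * uJ' x) + (∫ x in (0:ℝ)..1, q x * uI x * uJ x)
      = (bJ * uJ 0 - bI * uI 0) / (bJ - bI) := by
  have huIcc : Set.uIcc (0:ℝ) 1 = Set.Icc 0 1 := Set.uIcc_of_le zero_le_one
  -- continuity facts
  have cuI : ContinuousOn uI (Set.Icc 0 1) :=
    fun x hx => (huI' x hx).continuousWithinAt
  have cuJ : ContinuousOn uJ (Set.Icc 0 1) :=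
    fun x hx => (huJ' x hx).continuousWithinAt
  have cuI' : ContinuousOn uI' (Set.Icc 0 1) :=
    fun x hx => (huI'' x hx).continuousWithinAt
  have cuJ' : ContinuousOn uJ' (Set.Icc 0 1) :=
    fun x hx => (huJ'' x hx).continuousWithinAt
  have hint : ∀ {f : ℝ → ℝ}, ContinuousOn f (Set.Icc 0 1) →
      IntervalIntegrable f MeasureTheory.volume 0 1 := by
    intro f hf
    exact hf.intervalIntegrable_of_Icc zero_le_one
  -- integration by parts both ways
  have ibpJ : ∫ x in (0:ℝ)..1, uI' x * uJ x + uI x * uJ' x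
      = uI 1 * uJ 1 - uI 0 * uJ 0 := by
    apply intervalIntegral.integral_deriv_mul_eq_sub_of_hasDerivWithinAt
    · rw [huIcc]; exact huI'
    · rw [huIcc]; exact huJ'
    · exact hint cuI'
    · exact hint cuJ'
  have ibpJ2 : ∫ x in (0:ℝ)..1, uI' x * uJ' x + uI x * uJ'' x
      = uI 1 * uJ' 1 - uI 0 * uJ' 0 := by
    apply intervalIntegral.integral_deriv_mul_eq_sub_of_hasDerivWithinAt
    · rw [huIcc]; exact huI'
    · rw [huIcc]; exact huJ''
    · exact hint cuI'
    · exact hint huJc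
  have ibpI2 : ∫ x in (0:ℝ)..1, uJ' x * uI' x + uJ x * uI'' x
      = uJ 1 * uI' 1 - uJ 0 * uI' 0 := by
    apply intervalIntegral.integral_deriv_mul_eq_sub_of_hasDerivWithinAt
    · rw [huIcc]; exact huJ'
    · rw [huIcc]; exact huI''
    · exact hint cuJ'
    · exact hint huIc
  simp only [hI1, hJ1, hI0, hJ0] at ibpJ2 ibpI2
  -- rewrite the second-derivative terms via the ODE, a.e. on (0,1)
  have haeJ : ∫ x in (0:ℝ)..1, uI x * uJ'' x
      = ∫ x in (0:ℝ)..1, (q x * uI x * uJ x + bJ * (uI x * uJ x)) := by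
    apply intervalIntegral.integral_congr_ae
    filter_upwards [MeasureTheory.measure_eq_zero_iff_ae_notMem.mp (by simp : MeasureTheory.volume {(1:ℝ)} = 0)]
      with x hx1 hx
    rw [Set.uIoc_of_le zero_le_one] at hx
    have hx' : x ∈ Set.Ioo (0:ℝ) 1 := ⟨hx.1, lt_of_le_of_ne hx.2 (by simpa using hx1)⟩
    have := hodeJ x hx'
    have hJ'' : uJ'' x = q x * uJ x + bJ * uJ x := by linarith
    rw [hJ'']; ring
  have haeI : ∫ x in (0:ℝ)..1, uJ x * uI'' x
      = ∫ x in (0:ℝ)..1, (q x * uI x * uJ x + bI * (uI x * uJ x)) := by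
    apply intervalIntegral.integral_congr_ae
    filter_upwards [MeasureTheory.measure_eq_zero_iff_ae_notMem.mp (by simp : MeasureTheory.volume {(1:ℝ)} = 0)]
      with x hx1 hx
    rw [Set.uIoc_of_le zero_le_one] at hx
    have hx' : x ∈ Set.Ioo (0:ℝ) 1 := ⟨hx.1, lt_of_le_of_ne hx.2 (by simpa using hx1)⟩
    have := hodeI x hx'
    have hI'' : uI'' x = q x * uI x + bI * uI x := by linarith
    rw [hI'']; ring
  -- set up abbreviations
  set A := ∫ x in (0:ℝ)..1, uI' x * uJ' x with hA
  set Q := ∫ x in (0:ℝ)..1, q x * uI x * uJ x with hQ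
  set T := ∫ x in (0:ℝ)..1, uI x * uJ x with hT
  have hQT : ContinuousOn (fun x => q x * uI x * uJ x) (Set.Icc 0 1) :=
    (hq.mul cuI).mul cuJ
  have hTT : ContinuousOn (fun x => uI x * uJ x) (Set.Icc 0 1) := cuI.mul cuJ
  have hintQ := hint hQT
  have hintT := hint hTT
  have hintA := hint (cuI'.mul cuJ')
  have hintA' := hint (cuJ'.mul cuI')
  have hsplitJ : ∫ x in (0:ℝ)..1, (q x * uI x * uJ x + bJ * (uI x * uJ x))
      = Q + bJ * T := by
    rw [intervalIntegral.integral_add hintQ (hintT.const_mul bJ),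
      intervalIntegral.integral_const_mul]
  have hsplitI : ∫ x in (0:ℝ)..1, (q x * uI x * uJ x + bI * (uI x * uJ x))
      = Q + bI * T := by
    rw [intervalIntegral.integral_add hintQ (hintT.const_mul bI),
      intervalIntegral.integral_const_mul]
  have eqJ : A + (Q + bJ * T) = uI 0 := by
    have := ibpJ2
    rw [intervalIntegral.integral_add (f := fun x => uI' x * uJ' x) (g := fun x => uI x * uJ'' x) hintA (hint (cuI.mul huJc))] at this
    rw [← hA] at this
    have h2 : (∫ x in (0:ℝ)..1, uI x * uJ'' x) = Q + bJ * T := haeJ.trans hsplitJ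
    rw [h2] at this; linarith
  have eqI : A + (Q + bI * T) = uJ 0 := by
    have := ibpI2
    rw [intervalIntegral.integral_add (f := fun x => uJ' x * uI' x) (g := fun x => uJ x * uI'' x) hintA' (hint (cuJ.mul huIc))] at this
    have hAA : (∫ x in (0:ℝ)..1, uJ' x * uI' x) = A := by
      rw [hA]; apply intervalIntegral.integral_congr; intro x _; ring
    rw [hAA] at this
    have h2 : (∫ x in (0:ℝ)..1, uJ x * uI'' x) = Q + bI * T := haeI.trans hsplitI
    rw [h2] at this; linarith
  -- algebra
  have hbne : bJ - bI ≠ 0 := sub_ne_zero.mpr (Ne.symm hb)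
  have hTval : T = (uI 0 - uJ 0) / (bJ - bI) := by
    field_simp
    linarith
  rw [hTval] at eqJ
  field_simp at eqJ ⊢
  linarith
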